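/- Fix an integer d ≥ 2. For every k ≥ 0, F̃_k − G̃_k is a homogeneous polynomial of degree d^k in ℤ[b][x,y], and writing F̃_k − G̃_k = Σ_{j=0}^{d^k} e_{k,j}·x^j·y^{d^k−j} with e_{k,j} ∈ ℤ[b], both e_{k,0} and e_{k,d^k} are equal to b^{(d^k−1)/(d−1)} or −b^{(d^k−1)/(d−1)}. -/

import Mathlib

open MvPolynomial

/-- The polynomial ring `ℤ[b][x,y]`: two variables `0 ↦ x`, `1 ↦ y` over `ℤ[b]`. -/
abbrev Rb : Type := MvPolynomial (Fin 2) (Polynomial ℤ)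

/-- The parameter `b` viewed as a constant of `ℤ[b][x,y]`. -/
noncomputable def bb : Rb := C Polynomial.X

/-- The pair `(F̃_n/y, G̃_n)` in `ℤ[b][x,y]`: writing `F̃_n = y·H_n` (as `y ∣ F̃_n`),
the recurrence `F̃_0 = y`, `G̃_0 = x`, `F̃_n = F̃_{n−1}·G̃_{n−1}^{d−1}`,
`G̃_n = (x − b·y)·F̃_{n−1}^d/y + b·G̃_{n−1}^d` becomes `H_0 = 1`,
`H_n = H_{n−1}·G̃_{n−1}^{d−1}`, `G̃_n = (x − b·y)·y^{d−1}·H_{n−1}^d + b·G̃_{n−1}^d`. -/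
noncomputable def HG (d : ℕ) : ℕ → Rb × Rb
  | 0 => (1, X 0)
  | n + 1 => ((HG d n).1 * (HG d n).2 ^ (d - 1),
      (X 0 - bb * X 1) * X 1 ^ (d - 1) * (HG d n).1 ^ d + bb * (HG d n).2 ^ d)

/-- `F̃_n = y·H_n`. -/
noncomputable def Ft (d n : ℕ) : Rb := X 1 * (HG d n).1


lemma deg_two (s : Fin 2 →₀ ℕ) : s.degree = s 0 + s 1 := by
  rw [Finsupp.degree, ← Fin.sum_univ_two (f := fun i => s i)]
  exact Finset.sum_subset (Finset.subset_univ _) (by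
    intro i _ hi
    simpa using (Finsupp.notMem_support_iff.mp hi))

lemma eval_homog (i : Fin 2) (m : ℕ) (P : Rb) (hP : P.IsHomogeneous m) :
    eval (fun j => if j = i then (1 : Polynomial ℤ) else 0) P
      = coeff (Finsupp.single i m) P := by
  rw [eval_eq]
  rw [Finset.sum_eq_single (Finsupp.single i m)]
  · rcases Nat.eq_zero_or_pos m with hm | hm
    · simp [hm]
    · rw [Finsupp.support_single_ne_zero _ hm.ne']
      simp
  · intro s hs hne
    by_cases h : ∀ j : Fin 2, j ≠ i → s j = 0
    · exfalso
      apply hne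
      have hdeg : s.degree = m := by
        have := hP (Finsupp.mem_support_iff.mp hs)
        rw [Finsupp.degree_eq_weight_one]; exact this
      ext j
      by_cases hj : j = i
      · subst hj
        rw [deg_two] at hdeg
        rw [Finsupp.single_eq_same]
        fin_cases j <;> simp only [Fin.zero_eta, Fin.mk_one, Fin.isValue] at *
        · have h1 := h 1 (by simp)
          omega
        · have h0 := h 0 (by simp)
          omega
      · simp [Finsupp.single_apply, Ne.symm hj, h j hj]
    · push_neg at h
      obtain ⟨j, hj, hsj⟩ := h
      have : ∏ k ∈ s.support, (if k = i then (1 : Polynomial ℤ) else 0) ^ s k = 0 := by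
        apply Finset.prod_eq_zero (Finsupp.mem_support_iff.mpr hsj)
        simp [hj, zero_pow hsj]
      rw [this, mul_zero]
  · intro h
    rw [MvPolynomial.notMem_support_iff.mp h, zero_mul]

lemma key (d : ℕ) (hd : 2 ≤ d) (n : ℕ) :
    (HG d n).1.IsHomogeneous (d ^ n - 1) ∧ (HG d n).2.IsHomogeneous (d ^ n) ∧
    eval (fun j => if j = (0 : Fin 2) then (1 : Polynomial ℤ) else 0) (HG d n).2
      = Polynomial.X ^ (∑ i ∈ Finset.range n, d ^ i) ∧
    ((n = 0 ∧ eval (fun j => if j = (1 : Fin 2) then (1 : Polynomial ℤ) else 0) (HG d n).1 = 1 ∧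
        eval (fun j => if j = (1 : Fin 2) then (1 : Polynomial ℤ) else 0) (HG d n).2 = 0) ∨
     (eval (fun j => if j = (1 : Fin 2) then (1 : Polynomial ℤ) else 0) (HG d n).1 = 0 ∧
       (eval (fun j => if j = (1 : Fin 2) then (1 : Polynomial ℤ) else 0) (HG d n).2
          = Polynomial.X ^ (∑ i ∈ Finset.range n, d ^ i) ∨
        eval (fun j => if j = (1 : Fin 2) then (1 : Polynomial ℤ) else 0) (HG d n).2
          = -Polynomial.X ^ (∑ i ∈ Finset.range n, d ^ i)))) := by
  have hd1 : d - 1 ≠ 0 := by omega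
  induction n with
  | zero =>
      refine ⟨by simpa [HG] using isHomogeneous_one (Fin 2) (Polynomial ℤ), ?_, ?_, ?_⟩
      · simpa [HG] using isHomogeneous_X _ 0
      · simp [HG]
      · left; simp [HG]
  | succ n ih =>
      obtain ⟨A, B, C, D⟩ := ih
      have hm : 1 ≤ d ^ n := Nat.one_le_pow _ _ (by omega)
      have hp : d ^ (n + 1) = d ^ n * d := pow_succ d n
      have hmul : d ^ n * (d - 1) + d ^ n = d ^ n * d := by
        rw [← Nat.mul_succ]; congr 1; omega
      have hsub : (d ^ n - 1) * d + d = d ^ n * d := by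
        rw [← Nat.succ_mul]; congr 1; omega
      have ar1 : d ^ n - 1 + d ^ n * (d - 1) = d ^ (n + 1) - 1 := by omega
      have ar2 : 1 + 1 * (d - 1) + (d ^ n - 1) * d = d ^ (n + 1) := by omega
      have hS : (∑ i ∈ Finset.range (n + 1), d ^ i)
          = d * (∑ i ∈ Finset.range n, d ^ i) + 1 := by
        rw [Finset.sum_range_succ', Finset.mul_sum]
        simp [pow_succ']
      have hXS : (Polynomial.X : Polynomial ℤ) *
          ((Polynomial.X : Polynomial ℤ) ^ (∑ i ∈ Finset.range n, d ^ i)) ^ d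
          = Polynomial.X ^ (∑ i ∈ Finset.range (n + 1), d ^ i) := by
        rw [hS]; ring
      refine ⟨?_, ?_, ?_, ?_⟩
      · exact ar1 ▸ A.mul (B.pow (d - 1))
      · have t1 : ((X 0 - bb * X 1) * X 1 ^ (d - 1) * (HG d n).1 ^ d : Rb).IsHomogeneous
            (1 + 1 * (d - 1) + (d ^ n - 1) * d) := by
          refine IsHomogeneous.mul (IsHomogeneous.mul ?_ ((isHomogeneous_X _ _).pow _))
            (A.pow d)
          refine IsHomogeneous.sub (isHomogeneous_X _ _) ?_
          simpa [bb] using (isHomogeneous_C (Fin 2) (Polynomial.X : Polynomial ℤ)).mul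
            (isHomogeneous_X _ 1)
        have t2 : (bb * (HG d n).2 ^ d : Rb).IsHomogeneous (d ^ (n + 1)) := by
          have := (isHomogeneous_C (Fin 2) (Polynomial.X : Polynomial ℤ)).mul (B.pow d)
          simpa [bb, hp, mul_comm] using this
        exact (ar2 ▸ t1).add t2
      · have h : eval (fun j => if j = (0 : Fin 2) then (1 : Polynomial ℤ) else 0)
            (HG d (n + 1)).2 = Polynomial.X *
            (eval (fun j => if j = (0 : Fin 2) then (1 : Polynomial ℤ) else 0)
              (HG d n).2) ^ d := by
          simp [HG, bb, zero_pow hd1]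
        rw [h, C, hXS]
      · right
        rcases D with ⟨hn0, h1, h2⟩ | ⟨h1, h2⟩
        · refine ⟨?_, Or.inr ?_⟩
          · simp [HG, h1, h2, zero_pow hd1]
          · subst hn0
            have h : eval (fun j => if j = (1 : Fin 2) then (1 : Polynomial ℤ) else 0)
                (HG d 1).2 = -Polynomial.X := by
              simp [HG, bb, h1, h2, zero_pow (show d ≠ 0 by omega)]
            rw [h]
            simp
        · have hH : eval (fun j => if j = (1 : Fin 2) then (1 : Polynomial ℤ) else 0)
              (HG d (n + 1)).1 = 0 := by
            simp [HG, h1]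
          refine ⟨hH, ?_⟩
          have hG : eval (fun j => if j = (1 : Fin 2) then (1 : Polynomial ℤ) else 0)
              (HG d (n + 1)).2 = Polynomial.X *
              (eval (fun j => if j = (1 : Fin 2) then (1 : Polynomial ℤ) else 0)
                (HG d n).2) ^ d := by
            simp [HG, bb, h1, zero_pow (show d ≠ 0 by omega)]
          rcases h2 with h2 | h2
          · left; rw [hG, h2, hXS]
          · rw [hG, h2, neg_pow]
            rcases Nat.even_or_odd d with he | ho
            · left
              rw [he.neg_one_pow, one_mul, hXS]
            · right
              rw [ho.neg_one_pow, neg_one_mul, mul_neg, hXS]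

/-- For `d ≥ 2` and every `k ≥ 0`, `F̃_k − G̃_k` is homogeneous of
degree `d^k` in `x, y`, and writing `F̃_k − G̃_k = Σ_j e_{k,j}·x^j·y^{d^k−j}` with
`e_{k,j} ∈ ℤ[b]`, both `e_{k,0}` and `e_{k,d^k}` equal `±b^{(d^k−1)/(d−1)}`,
where `(d^k−1)/(d−1) = 1 + d + ⋯ + d^{k−1}`. -/
theorem extreme_coeffs_Ft_sub_Gt (d : ℕ) (hd : 2 ≤ d) (k : ℕ) :
    (Ft d k - (HG d k).2).IsHomogeneous (d ^ k) ∧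
    (coeff (Finsupp.single 1 (d ^ k)) (Ft d k - (HG d k).2) =
        Polynomial.X ^ (∑ i ∈ Finset.range k, d ^ i) ∨
      coeff (Finsupp.single 1 (d ^ k)) (Ft d k - (HG d k).2) =
        -Polynomial.X ^ (∑ i ∈ Finset.range k, d ^ i)) ∧
    (coeff (Finsupp.single 0 (d ^ k)) (Ft d k - (HG d k).2) =
        Polynomial.X ^ (∑ i ∈ Finset.range k, d ^ i) ∨
      coeff (Finsupp.single 0 (d ^ k)) (Ft d k - (HG d k).2) =
        -Polynomial.X ^ (∑ i ∈ Finset.range k, d ^ i)) := by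
  obtain ⟨A, B, C, D⟩ := key d hd k
  have hm : 1 ≤ d ^ k := Nat.one_le_pow _ _ (by omega)
  have hFt : (Ft d k).IsHomogeneous (d ^ k) := by
    have := (isHomogeneous_X (Polynomial ℤ) (1 : Fin 2)).mul A
    rwa [show 1 + (d ^ k - 1) = d ^ k by omega] at this
  have hhom : (Ft d k - (HG d k).2).IsHomogeneous (d ^ k) := hFt.sub B
  refine ⟨hhom, ?_, ?_⟩
  · rw [← eval_homog 1 _ _ hhom]
    rw [map_sub]
    have hF : eval (fun j => if j = (1 : Fin 2) then (1 : Polynomial ℤ) else 0) (Ft d k)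
        = eval (fun j => if j = (1 : Fin 2) then (1 : Polynomial ℤ) else 0) (HG d k).1 := by
      simp [Ft]
    rw [hF]
    rcases D with ⟨hk0, h1, h2⟩ | ⟨h1, h2⟩
    · left
      subst hk0
      rw [h1, h2, sub_zero]
      simp
    · rw [h1, zero_sub]
      rcases h2 with h2 | h2
      · right; rw [h2]
      · left; rw [h2, neg_neg]
  · right
    rw [← eval_homog 0 _ _ hhom]
    rw [map_sub]
    have hF : eval (fun j => if j = (0 : Fin 2) then (1 : Polynomial ℤ) else 0) (Ft d k)
        = 0 := by
      simp [Ft]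
    rw [hF, C, zero_sub]
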